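/- Let n ≥ 1, ε > 0, R ≥ 0, N ≥ 1, and let c_n^ε = ε^n · Γ(n/2+1) / (Γ(n) · n · π^{n/2}). Then ∫_{{(v_1,…,v_N) ∈ (ℝ^n)^N : Σ_{j=1}^{N} ‖v_j‖ ≤ R}} Π_{i=1}^{N} c_n^ε·exp(−ε‖v_i‖) dv_1⋯dv_N ≥ 1 − exp(−ε·R) · e_{n−1}(ε·R) · Σ_{k=0}^{N−1} (c_n^ε · V_n(R))^k, where V_n(R) = π^{n/2}·R^n/Γ(n/2+1) is the volume of the Euclidean ball of radius R in ℝ^n and e_k(α) = Σ_{i=0}^{k} α^i/i!. (Note Σ_{k=0}^{N−1} (c_n^ε·V_n(R))^k = ((c_n^ε·V_n(R))^N − 1)/(c_n^ε·V_n(R) − 1) when c_n^ε·V_n(R) ≠ 1, and c_n^ε·V_n(R) = (ε·R)^n/n!.) -/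

import Mathlib

open MeasureTheory Real Finset

/-- The normalising constant of the `n`-dimensional Laplacian density with parameter `ε`. -/
noncomputable def lapConst (n : ℕ) (ε : ℝ) : ℝ :=
  ε ^ n * Real.Gamma ((n : ℝ) / 2 + 1) / (Real.Gamma n * n * Real.pi ^ ((n : ℝ) / 2))

/-- The volume of the Euclidean ball of radius `R` in `ℝ^n`. -/
noncomputable def ballVol (n : ℕ) (R : ℝ) : ℝ :=
  Real.pi ^ ((n : ℝ) / 2) * R ^ n / Real.Gamma ((n : ℝ) / 2 + 1)

namespace LapAux

open Metric Set

abbrev EE (n : ℕ) := EuclideanSpace ℝ (Fin n)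

noncomputable def g (n : ℕ) (ε : ℝ) (v : EE n) : ℝ := lapConst n ε * Real.exp (-ε * ‖v‖)

noncomputable def P (n : ℕ) (ε : ℝ) (N : ℕ) (R : ℝ) : ℝ :=
  ∫ v in {v : Fin N → EE n | ∑ j, ‖v j‖ ≤ R}, ∏ i, g n ε (v i)

noncomputable def Φ (n : ℕ) (ε R : ℝ) : ℝ :=
  Real.exp (-ε * R) * ∑ i ∈ Finset.range n, (ε * R) ^ i / (Nat.factorial i)

lemma lapConst_pos {n : ℕ} {ε : ℝ} (hn : 1 ≤ n) (hε : 0 < ε) : 0 < lapConst n ε := by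
  have h1 : 0 < Real.Gamma ((n : ℝ) / 2 + 1) := Real.Gamma_pos_of_pos (by positivity)
  have h2 : 0 < Real.Gamma (n : ℝ) := Real.Gamma_pos_of_pos (by exact_mod_cast hn)
  have h3 : (0:ℝ) < n := by exact_mod_cast hn
  have h4 : 0 < Real.pi ^ ((n : ℝ) / 2) := Real.rpow_pos_of_pos Real.pi_pos _
  unfold lapConst
  positivity

lemma g_nonneg {n : ℕ} {ε : ℝ} (hn : 1 ≤ n) (hε : 0 < ε) (v : EE n) : 0 ≤ g n ε v :=
  mul_nonneg (lapConst_pos hn hε).le (Real.exp_nonneg _)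

lemma meas_set {n : ℕ} (N : ℕ) (R : ℝ) :
    MeasurableSet {v : Fin N → EE n | ∑ j, ‖v j‖ ≤ R} := by
  have : Continuous fun v : Fin N → EE n => ∑ j, ‖v j‖ := by fun_prop
  exact measurableSet_le this.measurable measurable_const

lemma euclid_nontrivial {n : ℕ} (hn : 1 ≤ n) : Nontrivial (EE n) := by
  refine Module.nontrivial_of_finrank_pos (R := ℝ) ?_
  rw [finrank_euclideanSpace_fin]; omega

lemma radial {n : ℕ} (hn : 1 ≤ n) (f : ℝ → ℝ) :
    ∫ x : EE n, f ‖x‖ =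
      (n : ℝ) * (Real.sqrt π ^ n / Real.Gamma ((n : ℝ) / 2 + 1)) *
        ∫ y in Set.Ioi (0:ℝ), y ^ (n - 1) * f y := by
  haveI := euclid_nontrivial hn
  haveI : Nonempty (Fin n) := Fin.pos_iff_nonempty.mp hn
  rw [MeasureTheory.integral_fun_norm_addHaar (volume : Measure (EE n)) f]
  simp only [finrank_euclideanSpace_fin, nsmul_eq_mul, smul_eq_mul]
  rw [measureReal_def, EuclideanSpace.volume_ball]
  simp only [Fintype.card_fin, ENNReal.ofReal_one, one_pow, one_mul]
  rw [ENNReal.toReal_ofReal (by positivity)]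
  ring

lemma Ioi_int {ε : ℝ} (hε : 0 < ε) (m : ℕ) :
    ∫ y in Set.Ioi (0:ℝ), y ^ m * Real.exp (-ε * y) = (Nat.factorial m) / ε ^ (m + 1) := by
  have h := Real.integral_rpow_mul_exp_neg_mul_Ioi (a := (m : ℝ) + 1) (r := ε)
    (by positivity) hε
  rw [show ((m : ℝ) + 1 - 1) = (m : ℝ) by ring] at h
  rw [show ∫ y in Set.Ioi (0:ℝ), y ^ m * Real.exp (-ε * y)
      = ∫ t in Set.Ioi (0:ℝ), t ^ (m : ℝ) * Real.exp (-(ε * t)) from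
    setIntegral_congr_fun measurableSet_Ioi fun t ht => by
      rw [Real.rpow_natCast, neg_mul], h]
  rw [show ((m : ℝ) + 1) = ((m + 1 : ℕ) : ℝ) by push_cast; ring, Real.rpow_natCast]
  push_cast
  rw [Real.Gamma_nat_eq_factorial]
  rw [div_pow, one_pow]
  field_simp

lemma sqrt_pi_pow (n : ℕ) : Real.sqrt π ^ n = Real.pi ^ ((n : ℝ) / 2) := by
  rw [Real.sqrt_eq_rpow, ← Real.rpow_natCast (π ^ ((1:ℝ)/2)) n, ← Real.rpow_mul Real.pi_pos.le]
  congr 1; ring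

lemma gamma_nat' {n : ℕ} (hn : 1 ≤ n) : Real.Gamma (n : ℝ) = (Nat.factorial (n - 1) : ℝ) := by
  obtain ⟨m, rfl⟩ : ∃ m, n = m + 1 := ⟨n - 1, (Nat.succ_pred_eq_of_pos hn).symm⟩
  push_cast
  rw [Real.Gamma_nat_eq_factorial]

lemma const_cancel {n : ℕ} {ε : ℝ} (hn : 1 ≤ n) (hε : 0 < ε) :
    lapConst n ε * ((n : ℝ) * (Real.sqrt π ^ n / Real.Gamma ((n : ℝ) / 2 + 1)) *
      ((Nat.factorial (n - 1) : ℝ) / ε ^ n)) = 1 := by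
  have h1 : 0 < Real.Gamma ((n : ℝ) / 2 + 1) := Real.Gamma_pos_of_pos (by positivity)
  have h3 : (0:ℝ) < n := by exact_mod_cast hn
  have h4 : 0 < Real.pi ^ ((n : ℝ) / 2) := Real.rpow_pos_of_pos Real.pi_pos _
  have h5 : (0:ℝ) < (Nat.factorial (n-1) : ℝ) := by exact_mod_cast Nat.factorial_pos _
  rw [lapConst, gamma_nat' hn, sqrt_pi_pow]
  field_simp

lemma vol_cb {n : ℕ} (hn : 1 ≤ n) {R : ℝ} (hR : 0 ≤ R) :
    (volume (closedBall (0 : EuclideanSpace ℝ (Fin n)) R)).toReal = ballVol n R := by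
  haveI : Nonempty (Fin n) := Fin.pos_iff_nonempty.mp hn
  rw [EuclideanSpace.volume_closedBall]
  simp only [Fintype.card_fin]
  rw [← ENNReal.ofReal_pow hR, ← ENNReal.ofReal_mul (by positivity),
    ENNReal.toReal_ofReal (by positivity)]
  rw [ballVol, sqrt_pi_pow]
  ring

lemma Φ_zero {n : ℕ} (hn : 1 ≤ n) (ε : ℝ) : Φ n ε 0 = 1 := by
  obtain ⟨m, rfl⟩ : ∃ m, n = m + 1 := ⟨n - 1, (Nat.succ_pred_eq_of_pos hn).symm⟩
  rw [Φ, Finset.sum_range_succ']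
  simp

lemma Φ_deriv {n : ℕ} (hn : 1 ≤ n) {ε : ℝ} (hε : 0 < ε) (t : ℝ) :
    HasDerivAt (fun t => -((Nat.factorial (n-1) : ℝ) / ε ^ n) * Φ n ε t)
      (t ^ (n - 1) * Real.exp (-ε * t)) t := by
  obtain ⟨m, rfl⟩ : ∃ m, n = m + 1 := ⟨n - 1, (Nat.succ_pred_eq_of_pos hn).symm⟩
  simp only [Nat.add_sub_cancel]
  have hS : HasDerivAt (fun t => ∑ i ∈ Finset.range (m+1), (ε * t) ^ i / (Nat.factorial i))
      (∑ i ∈ Finset.range (m+1), ((i : ℝ) * (ε * t) ^ (i - 1) * ε) / (Nat.factorial i)) t := by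
    refine HasDerivAt.fun_sum fun i _ => ?_
    have h1 : HasDerivAt (fun t : ℝ => ε * t) (ε * 1) t := (hasDerivAt_id t).const_mul ε
    have := (h1.pow i).div_const (Nat.factorial i : ℝ)
    simpa [mul_comm, mul_assoc, mul_left_comm] using this
  have hSval : (∑ i ∈ Finset.range (m+1), ((i : ℝ) * (ε * t) ^ (i - 1) * ε) / (Nat.factorial i))
      = ε * ∑ i ∈ Finset.range m, (ε * t) ^ i / (Nat.factorial i) := by
    rw [Finset.sum_range_succ']
    simp only [Nat.cast_zero, zero_mul, pow_zero, Nat.factorial_zero, Nat.cast_one, div_one,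
      zero_div, add_zero, Nat.add_sub_cancel]
    rw [Finset.mul_sum]
    refine Finset.sum_congr rfl fun i _ => ?_
    rw [Nat.factorial_succ]
    have : ((i:ℝ) + 1) ≠ 0 := by positivity
    push_cast
    field_simp
  have hexp : HasDerivAt (fun t : ℝ => Real.exp (-ε * t)) (-ε * Real.exp (-ε * t)) t := by
    have h1 : HasDerivAt (fun t : ℝ => -ε * t) (-ε * 1) t := (hasDerivAt_id t).const_mul (-ε)
    simpa [mul_comm] using h1.exp
  have hΦ : HasDerivAt (fun t => Φ (m+1) ε t)
      ((-ε * Real.exp (-ε * t)) * (∑ i ∈ Finset.range (m+1), (ε * t) ^ i / (Nat.factorial i))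
        + Real.exp (-ε * t) * (ε * ∑ i ∈ Finset.range m, (ε * t) ^ i / (Nat.factorial i))) t := by
    rw [show (fun t => Φ (m+1) ε t) = fun t => Real.exp (-ε * t) *
      ∑ i ∈ Finset.range (m+1), (ε * t) ^ i / (Nat.factorial i) from rfl]
    have := hexp.mul hS
    rwa [hSval] at this
  have := hΦ.const_mul (-((Nat.factorial m : ℝ) / ε ^ (m+1)))
  refine this.congr_deriv ?_
  rw [Finset.sum_range_succ]
  have hfac : (Nat.factorial m : ℝ) ≠ 0 := by exact_mod_cast (Nat.factorial_pos m).ne'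
  have hεne : ε ≠ 0 := hε.ne'
  field_simp
  ring

lemma interval_int {n : ℕ} (hn : 1 ≤ n) {ε : ℝ} (hε : 0 < ε) {R : ℝ} (hR : 0 ≤ R) :
    ∫ y in (0:ℝ)..R, y ^ (n-1) * Real.exp (-ε * y)
      = ((Nat.factorial (n-1) : ℝ) / ε ^ n) * (1 - Φ n ε R) := by
  rw [intervalIntegral.integral_eq_sub_of_hasDerivAt (fun x _ => Φ_deriv hn hε x)
    (Continuous.intervalIntegrable (by fun_prop) _ _)]
  rw [Φ_zero hn]
  ring

lemma integral_g_cb {n : ℕ} (hn : 1 ≤ n) {ε : ℝ} (hε : 0 < ε) {R : ℝ} (hR : 0 ≤ R) :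
    ∫ v in closedBall (0 : EE n) R, g n ε v = 1 - Φ n ε R := by
  have h0 : ∫ v in closedBall (0 : EE n) R, g n ε v
      = ∫ x : EE n, (fun t => Set.indicator (Set.Iic R)
          (fun s => lapConst n ε * Real.exp (-ε * s)) t) ‖x‖ := by
    rw [← integral_indicator (measurableSet_closedBall)]
    refine integral_congr_ae (Filter.Eventually.of_forall fun x => ?_)
    beta_reduce
    by_cases h : ‖x‖ ≤ R
    · rw [Set.indicator_of_mem (mem_closedBall_zero_iff.mpr h),
        Set.indicator_of_mem (Set.mem_Iic.mpr h)]
      rfl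
    · rw [Set.indicator_of_notMem (fun hc => h (mem_closedBall_zero_iff.mp hc)),
        Set.indicator_of_notMem (fun hc => h (Set.mem_Iic.mp hc))]
  have hr := radial (n := n) hn (fun t => Set.indicator (Set.Iic R)
    (fun s => lapConst n ε * Real.exp (-ε * s)) t)
  beta_reduce at hr
  rw [h0]
  beta_reduce
  rw [hr]
  have h1 : ∫ y in Set.Ioi (0:ℝ), y ^ (n-1) * (Set.indicator (Set.Iic R)
        (fun s => lapConst n ε * Real.exp (-ε * s)) y)
      = ∫ y in (0:ℝ)..R, lapConst n ε * (y ^ (n-1) * Real.exp (-ε * y)) := by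
    have : ∀ y : ℝ, y ^ (n-1) * (Set.indicator (Set.Iic R)
          (fun s => lapConst n ε * Real.exp (-ε * s)) y)
        = Set.indicator (Set.Iic R)
            (fun s => lapConst n ε * (s ^ (n-1) * Real.exp (-ε * s))) y := by
      intro y
      by_cases h : y ∈ Set.Iic R
      · rw [Set.indicator_of_mem h, Set.indicator_of_mem h]; ring
      · rw [Set.indicator_of_notMem h, Set.indicator_of_notMem h, mul_zero]
    rw [show (fun y => y ^ (n-1) * (Set.indicator (Set.Iic R)
          (fun s => lapConst n ε * Real.exp (-ε * s)) y)) = _ from funext this]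
    rw [setIntegral_indicator measurableSet_Iic, Set.Ioi_inter_Iic,
      intervalIntegral.integral_of_le hR]
  rw [h1, intervalIntegral.integral_const_mul, interval_int hn hε hR]
  linear_combination (1 - Φ n ε R) * const_cancel (n := n) (ε := ε) hn hε

lemma exp_bound {ε : ℝ} (hε : 0 < ε) (n : ℕ) {t : ℝ} (ht : 0 ≤ t) :
    Real.exp (-ε * t) ≤ (2 ^ (n+1) * (1 + (Nat.factorial (n+1)) / ε ^ (n+1)))
      * (1 + t) ^ (-(n+1 : ℝ)) := by
  have h1t : (0:ℝ) < 1 + t := by linarith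
  have hpow : (1+t) ^ (-(n+1 : ℝ)) = ((1+t) ^ (n+1 : ℕ))⁻¹ := by
    rw [← Real.rpow_natCast (1+t) (n+1), ← Real.rpow_neg h1t.le]
    push_cast; ring_nf
  rw [hpow, ← div_eq_mul_inv, le_div_iff₀ (by positivity)]
  have key1 : (1+t)^(n+1) ≤ 2^(n+1) * (1 + t^(n+1)) := by
    have h2 : 1 + t ≤ 2 * max 1 t := by
      have := le_max_left (1:ℝ) t; have := le_max_right (1:ℝ) t; linarith
    calc (1+t)^(n+1) ≤ (2 * max 1 t)^(n+1) := by
          exact pow_le_pow_left₀ (by linarith) h2 _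
      _ = 2^(n+1) * (max 1 t)^(n+1) := mul_pow _ _ _
      _ ≤ 2^(n+1) * (1 + t^(n+1)) := by
          have : (max 1 t)^(n+1) ≤ 1 + t^(n+1) := by
            rcases max_cases 1 t with ⟨h, _⟩ | ⟨h, _⟩ <;> rw [h]
            · rw [one_pow]; nlinarith [pow_nonneg ht (n+1)]
            · linarith
          gcongr
  have key2 : t^(n+1) * Real.exp (-ε*t) ≤ (Nat.factorial (n+1)) / ε^(n+1) := by
    have hterm : (ε*t)^(n+1) / (Nat.factorial (n+1)) ≤ Real.exp (ε*t) := by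
      refine le_trans ?_ (Real.sum_le_exp_of_nonneg (by positivity) (n+2))
      exact Finset.single_le_sum (f := fun i => (ε*t)^i / (Nat.factorial i))
        (fun i _ => by positivity) (Finset.mem_range.mpr (Nat.lt_succ_self _))
    have hA : (ε*t)^(n+1) / (Nat.factorial (n+1)) * Real.exp (-ε*t) ≤ 1 := by
      calc (ε*t)^(n+1) / (Nat.factorial (n+1)) * Real.exp (-ε*t)
          ≤ Real.exp (ε*t) * Real.exp (-ε*t) := by
            exact mul_le_mul_of_nonneg_right hterm (Real.exp_nonneg _)
        _ = 1 := by rw [← Real.exp_add]; ring_nf; exact Real.exp_zero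
    have hfac : (0:ℝ) < (Nat.factorial (n+1) : ℝ) := by exact_mod_cast Nat.factorial_pos _
    rw [← sub_nonneg]
    have hmul := mul_nonneg (sub_nonneg.mpr hA) (le_of_lt (show (0:ℝ) <
      (Nat.factorial (n+1)) / ε^(n+1) by positivity))
    calc (0:ℝ) ≤ (1 - (ε*t)^(n+1) / (Nat.factorial (n+1)) * Real.exp (-ε*t))
          * ((Nat.factorial (n+1)) / ε^(n+1)) := hmul
      _ = (Nat.factorial (n+1)) / ε^(n+1) - t^(n+1) * Real.exp (-ε*t) := by
          rw [mul_pow]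
          field_simp
  have he1 : Real.exp (-ε*t) ≤ 1 := Real.exp_le_one_iff.mpr (by nlinarith)
  have he0 : 0 ≤ Real.exp (-ε*t) := Real.exp_nonneg _
  have hq : (0:ℝ) ≤ 2^(n+1) := by positivity
  nlinarith [mul_le_mul_of_nonneg_left key1 he0, mul_le_mul_of_nonneg_left key2 hq]

lemma g_integrable {n : ℕ} (hn : 1 ≤ n) {ε : ℝ} (hε : 0 < ε) : Integrable (g n ε) := by
  have hfin : ((Module.finrank ℝ (EE n) : ℝ)) < ((n:ℝ) + 1) := by
    rw [finrank_euclideanSpace_fin]; norm_num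
  have hbound := (integrable_one_add_norm (E := EE n) (μ := volume) hfin).const_mul
    (lapConst n ε * (2 ^ (n+1) * (1 + (Nat.factorial (n+1)) / ε ^ (n+1))))
  refine hbound.mono' (Continuous.aestronglyMeasurable (by unfold g; fun_prop))
    (Filter.Eventually.of_forall fun x => ?_)
  have h1 : 0 ≤ g n ε x := mul_nonneg (lapConst_pos hn hε).le (Real.exp_nonneg _)
  rw [Real.norm_of_nonneg h1]
  unfold g
  rw [mul_assoc]
  refine mul_le_mul_of_nonneg_left ?_ (lapConst_pos hn hε).le
  exact exp_bound hε n (norm_nonneg x)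

lemma prod_integrable {n : ℕ} (hn : 1 ≤ n) {ε : ℝ} (hε : 0 < ε) (N : ℕ) :
    Integrable (fun v : Fin N → EE n => ∏ i, g n ε (v i)) :=
  Integrable.fintype_prod (fun _ => g_integrable hn hε)

lemma P_nonneg {n : ℕ} {ε : ℝ} (hn : 1 ≤ n) (hε : 0 < ε) (N : ℕ) (R : ℝ) : 0 ≤ P n ε N R :=
  setIntegral_nonneg (meas_set N R) fun v _ =>
    Finset.prod_nonneg fun i _ => g_nonneg hn hε _

lemma P_succ_fun {n : ℕ} (hn : 1 ≤ n) {ε : ℝ} (hε : 0 < ε) (N : ℕ) (R : ℝ) :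
    (P n ε (N + 1) R = ∫ x : EE n, g n ε x * P n ε N (R - ‖x‖)) ∧
      Integrable (fun x : EE n => g n ε x * P n ε N (R - ‖x‖)) := by
  set T : Set (EE n × (Fin N → EE n)) := {p | ‖p.1‖ + ∑ j, ‖p.2 j‖ ≤ R} with hT
  have hTmeas : MeasurableSet T := by
    have : Continuous fun p : EE n × (Fin N → EE n) => ‖p.1‖ + ∑ j, ‖p.2 j‖ := by fun_prop
    exact measurableSet_le this.measurable measurable_const
  set F : EE n × (Fin N → EE n) → ℝ :=
    T.indicator (fun p => g n ε p.1 * ∏ i, g n ε (p.2 i)) with hF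
  have hFint : Integrable F ((volume : Measure (EE n)).prod
      (volume : Measure (Fin N → EE n))) :=
    ((g_integrable hn hε).mul_prod (prod_integrable hn hε N)).indicator hTmeas
  have step3 : ∀ x : EE n, (∫ y : Fin N → EE n, F (x, y)) = g n ε x * P n ε N (R - ‖x‖) := by
    intro x
    have hfun : (fun y : Fin N → EE n => F (x, y))
        = Set.indicator {y : Fin N → EE n | ∑ j, ‖y j‖ ≤ R - ‖x‖}
            (fun y => g n ε x * ∏ i, g n ε (y i)) := by
      funext y
      simp only [hF, Set.indicator_apply, Set.mem_setOf_eq, hT]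
      by_cases h : ∑ j, ‖y j‖ ≤ R - ‖x‖
      · rw [if_pos h, if_pos (by linarith)]
      · rw [if_neg h, if_neg (by intro hc; exact h (by linarith))]
    rw [hfun, integral_indicator (meas_set N (R - ‖x‖)), integral_const_mul]
    rfl
  have step1 : P n ε (N + 1) R = ∫ p, F p ∂((volume : Measure (EE n)).prod
      (volume : Measure (Fin N → EE n))) := by
    rw [P, ← integral_indicator (meas_set (N+1) R)]
    have hmp := (measurePreserving_piFinSuccAbove
      (fun _ : Fin (N+1) => (volume : Measure (EE n))) 0).symm
    rw [volume_pi, ← hmp.integral_comp']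
    rw [show (Measure.pi fun _ : Fin N => (volume : Measure (EE n)))
      = (volume : Measure (Fin N → EE n)) from volume_pi.symm]
    refine integral_congr_ae (Filter.Eventually.of_forall fun p => ?_)
    simp only [MeasurableEquiv.piFinSuccAbove_symm_apply, Fin.insertNthEquiv,
      Equiv.coe_fn_mk, Fin.insertNth_zero]
    simp only [Set.indicator_apply, Set.mem_setOf_eq, Fin.sum_univ_succ, Fin.prod_univ_succ,
      Fin.zero_succAbove, cast_eq, Fin.cons_zero, Fin.cons_succ, hF, hT]
  have step2 : ∫ p, F p ∂((volume : Measure (EE n)).prod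
      (volume : Measure (Fin N → EE n))) = ∫ x : EE n, ∫ y : Fin N → EE n, F (x, y) :=
    integral_prod F hFint
  constructor
  · rw [step1, step2]
    exact integral_congr_ae (Filter.Eventually.of_forall step3)
  · exact (hFint.integral_prod_left).congr (Filter.Eventually.of_forall step3)

lemma P_zero {n : ℕ} {ε : ℝ} (hn : 1 ≤ n) (hε : 0 < ε) {R : ℝ} (hR : 0 ≤ R) : P n ε 0 R = 1 := by
  have hset : {v : Fin 0 → EE n | ∑ j, ‖v j‖ ≤ R} = Set.univ := by
    ext v; simp [hR]
  rw [P, hset, setIntegral_univ]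
  simp only [Finset.univ_eq_empty, Finset.prod_empty, integral_const, smul_eq_mul, mul_one]
  rw [volume_pi, measureReal_def, Measure.pi_empty_univ]
  simp

lemma ballVol_nonneg {n : ℕ} {t : ℝ} (ht : 0 ≤ t) : 0 ≤ ballVol n t := by
  have := Real.Gamma_pos_of_pos (show (0:ℝ) < (n:ℝ)/2 + 1 by positivity)
  have := Real.rpow_pos_of_pos Real.pi_pos ((n:ℝ)/2)
  rw [ballVol]; positivity

lemma ballVol_mono {n : ℕ} {s t : ℝ} (hs : 0 ≤ s) (hst : s ≤ t) : ballVol n s ≤ ballVol n t := by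
  have h1 := Real.Gamma_pos_of_pos (show (0:ℝ) < (n:ℝ)/2 + 1 by positivity)
  have h2 := (Real.rpow_pos_of_pos Real.pi_pos ((n:ℝ)/2)).le
  rw [ballVol, ballVol]
  gcongr

lemma main {n : ℕ} {ε : ℝ} (hn : 1 ≤ n) (hε : 0 < ε) (N : ℕ) :
    ∀ R : ℝ, 0 ≤ R →
      1 - Φ n ε R * ∑ k ∈ Finset.range N, (lapConst n ε * ballVol n R) ^ k ≤ P n ε N R := by
  induction N with
  | zero =>
      intro R hR
      rw [P_zero hn hε hR]
      simp
  | succ N ih =>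
      intro R hR
      have hcpos : 0 < lapConst n ε := lapConst_pos hn hε
      have hΦc : Continuous (fun t : ℝ => Φ n ε t) := by unfold Φ; fun_prop
      obtain ⟨hPeq, hPint⟩ := P_succ_fun hn hε N R
      have hgc : Continuous (g n ε) := by unfold g; fun_prop
      have hqc : Continuous (fun t : ℝ => lapConst n ε * ballVol n t) := by
        unfold ballVol; fun_prop
      have hcontk : ∀ k : ℕ, Continuous (fun x : EE n =>
          g n ε x * (Φ n ε (R - ‖x‖) * (lapConst n ε * ballVol n (R - ‖x‖)) ^ k)) := by
        intro k
        exact hgc.mul ((hΦc.comp (by fun_prop)).mul ((hqc.comp (by fun_prop)).pow k))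
      have hcompact : IsCompact (closedBall (0 : EE n) R) := isCompact_closedBall _ _
      have h2 : ∫ x in closedBall (0 : EE n) R, g n ε x * P n ε N (R - ‖x‖)
          ≤ ∫ x : EE n, g n ε x * P n ε N (R - ‖x‖) :=
        setIntegral_le_integral hPint (Filter.Eventually.of_forall fun x =>
          mul_nonneg (g_nonneg hn hε x) (P_nonneg hn hε N _))
      have h3 : ∫ x in closedBall (0 : EE n) R,
            g n ε x * (1 - Φ n ε (R - ‖x‖) *
              ∑ k ∈ Finset.range N, (lapConst n ε * ballVol n (R - ‖x‖)) ^ k)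
          ≤ ∫ x in closedBall (0 : EE n) R, g n ε x * P n ε N (R - ‖x‖) := by
        refine setIntegral_mono_on ?_ hPint.integrableOn measurableSet_closedBall ?_
        · refine ContinuousOn.integrableOn_compact hcompact (Continuous.continuousOn ?_)
          refine hgc.mul (continuous_const.sub ((hΦc.comp (by fun_prop)).mul ?_))
          exact continuous_finset_sum _ fun k _ => (hqc.comp (by fun_prop)).pow k
        · intro x hx
          have hxR : ‖x‖ ≤ R := mem_closedBall_zero_iff.mp hx
          refine mul_le_mul_of_nonneg_left ?_ (g_nonneg hn hε x)
          exact ih (R - ‖x‖) (by linarith)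
      have h4 : ∫ x in closedBall (0 : EE n) R,
            g n ε x * (1 - Φ n ε (R - ‖x‖) *
              ∑ k ∈ Finset.range N, (lapConst n ε * ballVol n (R - ‖x‖)) ^ k)
          = (1 - Φ n ε R) - ∑ k ∈ Finset.range N, ∫ x in closedBall (0 : EE n) R,
              g n ε x * (Φ n ε (R - ‖x‖) * (lapConst n ε * ballVol n (R - ‖x‖)) ^ k) := by
        have e1 : ∀ x : EE n, g n ε x * (1 - Φ n ε (R - ‖x‖) *
              ∑ k ∈ Finset.range N, (lapConst n ε * ballVol n (R - ‖x‖)) ^ k)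
            = g n ε x - ∑ k ∈ Finset.range N,
                g n ε x * (Φ n ε (R - ‖x‖) * (lapConst n ε * ballVol n (R - ‖x‖)) ^ k) := by
          intro x
          rw [Finset.mul_sum, mul_one_sub, Finset.mul_sum]
        rw [integral_congr_ae (Filter.Eventually.of_forall e1), integral_sub
            ((g_integrable hn hε).integrableOn)
            (integrable_finset_sum _ fun k _ =>
              ((hcontk k).continuousOn.integrableOn_compact hcompact)),
          integral_finset_sum _ (fun k _ =>
            ((hcontk k).continuousOn.integrableOn_compact hcompact)),
          integral_g_cb hn hε hR]
      have h7 : ∀ k : ℕ, ∫ x in closedBall (0 : EE n) R,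
            g n ε x * (Φ n ε (R - ‖x‖) * (lapConst n ε * ballVol n (R - ‖x‖)) ^ k)
          ≤ Φ n ε R * (lapConst n ε * ballVol n R) ^ (k + 1) := by
        intro k
        have hpt : ∀ x ∈ closedBall (0 : EE n) R,
            g n ε x * (Φ n ε (R - ‖x‖) * (lapConst n ε * ballVol n (R - ‖x‖)) ^ k)
              ≤ lapConst n ε * Real.exp (-ε * R) *
                  (∑ i ∈ Finset.range n, (ε * R) ^ i / (Nat.factorial i)) *
                  (lapConst n ε * ballVol n R) ^ k := by
          intro x hx
          have hxR : ‖x‖ ≤ R := mem_closedBall_zero_iff.mp hx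
          have hx0 : 0 ≤ ‖x‖ := norm_nonneg x
          have hexp : Real.exp (-ε * ‖x‖) * Real.exp (-ε * (R - ‖x‖)) = Real.exp (-ε * R) := by
            rw [← Real.exp_add]; congr 1; ring
          have e2 : g n ε x * (Φ n ε (R - ‖x‖) * (lapConst n ε * ballVol n (R - ‖x‖)) ^ k)
              = (Real.exp (-ε * ‖x‖) * Real.exp (-ε * (R - ‖x‖))) * (lapConst n ε *
                  ((∑ i ∈ Finset.range n, (ε * (R - ‖x‖)) ^ i / (Nat.factorial i)) *
                    (lapConst n ε * ballVol n (R - ‖x‖)) ^ k)) := by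
            simp only [g, Φ]
            ring
          rw [e2, hexp]
          have hS1 : (∑ i ∈ Finset.range n, (ε * (R - ‖x‖)) ^ i / (Nat.factorial i))
              ≤ ∑ i ∈ Finset.range n, (ε * R) ^ i / (Nat.factorial i) := by
            refine Finset.sum_le_sum fun i _ => ?_
            have h := pow_le_pow_left₀ (show 0 ≤ ε * (R - ‖x‖) by nlinarith)
              (show ε * (R - ‖x‖) ≤ ε * R by nlinarith) i
            exact div_le_div_of_nonneg_right h (by positivity)
          have hS0 : 0 ≤ ∑ i ∈ Finset.range n, (ε * (R - ‖x‖)) ^ i / (Nat.factorial i) := by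
            refine Finset.sum_nonneg fun i _ => ?_
            have : 0 ≤ ε * (R - ‖x‖) := by nlinarith
            positivity
          have hq1 : (lapConst n ε * ballVol n (R - ‖x‖)) ^ k
              ≤ (lapConst n ε * ballVol n R) ^ k := by
            refine pow_le_pow_left₀ ?_ ?_ k
            · exact mul_nonneg hcpos.le (ballVol_nonneg (by linarith))
            · exact mul_le_mul_of_nonneg_left (ballVol_mono (by linarith) (by linarith)) hcpos.le
          have hq0 : 0 ≤ (lapConst n ε * ballVol n (R - ‖x‖)) ^ k :=
            pow_nonneg (mul_nonneg hcpos.le (ballVol_nonneg (by linarith))) k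
          calc Real.exp (-ε * R) * (lapConst n ε *
                ((∑ i ∈ Finset.range n, (ε * (R - ‖x‖)) ^ i / (Nat.factorial i)) *
                  (lapConst n ε * ballVol n (R - ‖x‖)) ^ k))
              ≤ Real.exp (-ε * R) * (lapConst n ε *
                ((∑ i ∈ Finset.range n, (ε * R) ^ i / (Nat.factorial i)) *
                  (lapConst n ε * ballVol n R) ^ k)) := by
                refine mul_le_mul_of_nonneg_left ?_ (Real.exp_nonneg _)
                refine mul_le_mul_of_nonneg_left ?_ hcpos.le
                exact mul_le_mul hS1 hq1 hq0 (hS0.trans hS1)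
            _ = lapConst n ε * Real.exp (-ε * R) *
                  (∑ i ∈ Finset.range n, (ε * R) ^ i / (Nat.factorial i)) *
                  (lapConst n ε * ballVol n R) ^ k := by ring
        calc ∫ x in closedBall (0 : EE n) R,
              g n ε x * (Φ n ε (R - ‖x‖) * (lapConst n ε * ballVol n (R - ‖x‖)) ^ k)
            ≤ ∫ _x in closedBall (0 : EE n) R, lapConst n ε * Real.exp (-ε * R) *
                  (∑ i ∈ Finset.range n, (ε * R) ^ i / (Nat.factorial i)) *
                  (lapConst n ε * ballVol n R) ^ k := by
              refine setIntegral_mono_on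
                ((hcontk k).continuousOn.integrableOn_compact hcompact)
                (integrableOn_const hcompact.measure_lt_top.ne)
                measurableSet_closedBall hpt
          _ = Φ n ε R * (lapConst n ε * ballVol n R) ^ (k + 1) := by
              rw [setIntegral_const, smul_eq_mul, measureReal_def, vol_cb hn hR, Φ, pow_succ]
              ring
      have hsum : Φ n ε R * ∑ k ∈ Finset.range (N + 1), (lapConst n ε * ballVol n R) ^ k
          = Φ n ε R + ∑ k ∈ Finset.range N, Φ n ε R * (lapConst n ε * ballVol n R) ^ (k + 1) := by
        rw [Finset.sum_range_succ', pow_zero, mul_add, mul_one, Finset.mul_sum, add_comm]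
      have hsum2 : ∑ k ∈ Finset.range N, ∫ x in closedBall (0 : EE n) R,
            g n ε x * (Φ n ε (R - ‖x‖) * (lapConst n ε * ballVol n (R - ‖x‖)) ^ k)
          ≤ ∑ k ∈ Finset.range N, Φ n ε R * (lapConst n ε * ballVol n R) ^ (k + 1) :=
        Finset.sum_le_sum fun k _ => h7 k
      rw [hPeq]
      have hh := h4 ▸ h3
      calc 1 - Φ n ε R * ∑ k ∈ Finset.range (N + 1), (lapConst n ε * ballVol n R) ^ k
          = (1 - Φ n ε R) - ∑ k ∈ Finset.range N,
              Φ n ε R * (lapConst n ε * ballVol n R) ^ (k + 1) := by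
            linear_combination -hsum
        _ ≤ (1 - Φ n ε R) - ∑ k ∈ Finset.range N, ∫ x in closedBall (0 : EE n) R,
              g n ε x * (Φ n ε (R - ‖x‖) * (lapConst n ε * ballVol n (R - ‖x‖)) ^ k) := by
            linarith
        _ ≤ ∫ x in closedBall (0 : EE n) R, g n ε x * P n ε N (R - ‖x‖) := by linarith [hh]
        _ ≤ ∫ x : EE n, g n ε x * P n ε N (R - ‖x‖) := h2

end LapAux

/-- for `n, N ≥ 1`, `ε > 0`, `R ≥ 0`, the integral of the product of `N`
independent `n`-dimensional Laplacian densities over the region where the sum of the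
Euclidean norms is at most `R` is at least
`1 − exp(−εR) · e_{n−1}(εR) · Σ_{k=0}^{N−1} (c_n^ε · V_n(R))^k`. -/
theorem lapIter_lower_bound (n : ℕ) (hn : 1 ≤ n) (ε : ℝ) (hε : 0 < ε)
    (R : ℝ) (hR : 0 ≤ R) (N : ℕ) (hN : 1 ≤ N) :
    1 - Real.exp (-ε * R) * (∑ k ∈ Finset.range n, (ε * R) ^ k / (Nat.factorial k)) *
          ∑ k ∈ Finset.range N, (lapConst n ε * ballVol n R) ^ k ≤
      ∫ v in {v : Fin N → EuclideanSpace ℝ (Fin n) | ∑ j, ‖v j‖ ≤ R},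
        ∏ i, lapConst n ε * Real.exp (-ε * ‖v i‖) := by
  have h := LapAux.main hn hε N R hR
  rw [LapAux.P] at h
  simpa [LapAux.Φ, LapAux.g, mul_assoc] using h
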